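/- ODE comparison for the Łojasiewicz decay: let K ≥ 1, 1 < α < 2, ε > 0, and let φ : [0, S] → ℝ be differentiable with φ'(s) + (2/K²)|φ(s)|^{2/α} ≤ 0 and φ(0) ≤ ε. Define ϕ(s) = (ε^{−(2−α)/α} + (2(2−α)/(K²α)) s)^{−α/(2−α)}. Then φ(s) ≤ ϕ(s) for all s ∈ [0, S]. -/

import Mathlib

/-- ODE comparison for the Łojasiewicz decay: let `K ≥ 1`,
`1 < α < 2`, `ε > 0`, and let `φ : [0,S] → ℝ` be differentiable with
`φ' + (2/K²)|φ|^{2/α} ≤ 0` and `φ(0) ≤ ε`. Then `φ(s) ≤ ϕ(s)` on `[0,S]`, where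
`ϕ(s) = (ε^{−(2−α)/α} + (2(2−α)/(K²α)) s)^{−α/(2−α)}`. -/
theorem lojasiewicz_ode_comparison
    (K α ε S : ℝ) (hK : 1 ≤ K) (hα₁ : 1 < α) (hα₂ : α < 2) (hε : 0 < ε)
    (hS : 0 ≤ S) (φ φ' : ℝ → ℝ)
    (hφ : ∀ s ∈ Set.Icc 0 S, HasDerivAt φ (φ' s) s)
    (hODE : ∀ s ∈ Set.Icc 0 S, φ' s + (2 / K ^ 2) * |φ s| ^ (2 / α) ≤ 0)
    (h0 : φ 0 ≤ ε) :
    ∀ s ∈ Set.Icc 0 S,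
      φ s ≤ (ε ^ (-(2 - α) / α) + (2 * (2 - α) / (K ^ 2 * α)) * s)
        ^ (-α / (2 - α)) := by
  have hα0 : (0:ℝ) < α := by linarith
  have h2α : (0:ℝ) < 2 - α := by linarith
  have hK0 : (0:ℝ) < K := by linarith
  have hK2 : (0:ℝ) < K ^ 2 := by positivity
  set c : ℝ := ε ^ (-(2 - α) / α) with hc_def
  set m : ℝ := 2 * (2 - α) / (K ^ 2 * α) with hm_def
  set r : ℝ := -α / (2 - α) with hr_def
  have hc : 0 < c := Real.rpow_pos_of_pos hε _
  have hm : 0 < m := by rw [hm_def]; positivity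
  have hg : ∀ s : ℝ, 0 ≤ s → 0 < c + m * s := fun s hs => by nlinarith
  have hB0 : c ^ r = ε := by
    rw [hc_def, ← Real.rpow_mul hε.le]
    have h : -(2 - α) / α * r = 1 := by
      rw [hr_def]; field_simp
    rw [h, Real.rpow_one]
  have hDeriv : ∀ s : ℝ, 0 ≤ s →
      HasDerivAt (fun t => (c + m * t) ^ r)
        (-(2 / K ^ 2) * ((c + m * s) ^ r) ^ (2 / α)) s := by
    intro s hs
    have hgs := hg s hs
    have h1 : HasDerivAt (fun t : ℝ => c + m * t) m s := by
      simpa using ((hasDerivAt_id s).const_mul m).const_add c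
    have h2 := (Real.hasDerivAt_rpow_const (p := r) (Or.inl hgs.ne')).comp s h1
    refine h2.congr_deriv ?_
    rw [← Real.rpow_mul hgs.le]
    have he : r * (2 / α) = r - 1 := by
      rw [hr_def]; field_simp; ring
    have hcoef : -(2 / K ^ 2) = r * m := by
      rw [hr_def, hm_def]; field_simp
    rw [he, hcoef]; ring
  intro s hs
  obtain ⟨hs0, hsS⟩ := hs
  apply le_of_forall_pos_le_add
  intro δ hδ
  set l : ℝ := δ / Real.exp S with hl_def
  have hl : 0 < l := by rw [hl_def]; positivity
  set B : ℝ → ℝ := fun t => (c + m * t) ^ r + l * Real.exp t with hB_def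
  set B' : ℝ → ℝ := fun t => -(2 / K ^ 2) * ((c + m * t) ^ r) ^ (2 / α)
    + l * Real.exp t with hB'_def
  have hBd0 : ∀ x : ℝ, 0 ≤ x → HasDerivAt B (B' x) x := fun x hx =>
    (hDeriv x hx).add ((Real.hasDerivAt_exp x).const_mul l)
  have hBd : ∀ x ∈ Set.Ico (0:ℝ) S, HasDerivWithinAt B (B' x) (Set.Ici x) x :=
    fun x hx => (hBd0 x hx.1).hasDerivWithinAt
  have hBc : ContinuousOn B (Set.Icc 0 S) := fun x hx =>
    (hBd0 x hx.1).continuousAt.continuousWithinAt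
  have hfc : ContinuousOn φ (Set.Icc 0 S) := fun x hx =>
    (hφ x hx).continuousAt.continuousWithinAt
  have hfd : ∀ x ∈ Set.Ico (0:ℝ) S, HasDerivWithinAt φ (φ' x) (Set.Ici x) x :=
    fun x hx => (hφ x (Set.Ico_subset_Icc_self hx)).hasDerivWithinAt
  have ha : φ 0 ≤ B 0 := by
    have : B 0 = ε + l := by
      simp only [hB_def, mul_zero, add_zero, hB0, Real.exp_zero, mul_one]
    rw [this]; linarith
  have bound : ∀ x ∈ Set.Ico (0:ℝ) S, φ x = B x → φ' x < B' x := by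
    intro x hx hfx
    have hgx := hg x hx.1
    have hϕpos : 0 < (c + m * x) ^ r := Real.rpow_pos_of_pos hgx r
    have hBx : (c + m * x) ^ r ≤ B x := by
      simp only [hB_def]
      have := mul_pos hl (Real.exp_pos x)
      linarith
    have hBpos : 0 < B x := lt_of_lt_of_le hϕpos hBx
    have h1 : φ' x ≤ -(2 / K ^ 2) * |φ x| ^ (2 / α) := by
      have := hODE x (Set.Ico_subset_Icc_self hx); linarith
    rw [hfx, abs_of_pos hBpos] at h1
    have h2 : ((c + m * x) ^ r) ^ (2 / α) ≤ (B x) ^ (2 / α) :=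
      Real.rpow_le_rpow hϕpos.le hBx (by positivity)
    have h3 : -(2 / K ^ 2) * (B x) ^ (2 / α)
        ≤ -(2 / K ^ 2) * ((c + m * x) ^ r) ^ (2 / α) := by
      have := mul_le_mul_of_nonneg_left h2 (le_of_lt (by positivity : (0:ℝ) < 2 / K ^ 2))
      linarith
    have h4 := mul_pos hl (Real.exp_pos x)
    simp only [hB'_def]; linarith
  have key := image_le_of_deriv_right_lt_deriv_boundary' hfc hfd ha hBc hBd bound
    (Set.mem_Icc.mpr ⟨hs0, hsS⟩)
  have hls : l * Real.exp s ≤ δ := by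
    have h1 : Real.exp s ≤ Real.exp S := Real.exp_le_exp.mpr hsS
    have h2 : l * Real.exp S = δ := by
      rw [hl_def, div_mul_cancel₀ _ (Real.exp_ne_zero S)]
    nlinarith
  have : B s = (c + m * s) ^ r + l * Real.exp s := rfl
  rw [this] at key
  linarith
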